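/- Let x ∈ (−1, 1/7) and define f(x) = 42·ln(1+x) + 6·ln(1−7x). Then f is increasing on (−1,0) and decreasing on (0,1/7), f(0) = 0, and for any t ∈ (0, 1/49] and any x with |x| ≥ 4t/7, one has (1+x)^42·(1−7x)^6 ≤ max{(1+4t/7)^42·(1−4t)^6, (1−4t/7)^42·(1+4t)^6} = (1−4t/7)^42·(1+4t)^6 < 1. -/

import Mathlib

noncomputable def F15 (x : ℝ) : ℝ := 42 * Real.log (1 + x) + 6 * Real.log (1 - 7 * x)

lemma F15_hasDeriv {x : ℝ} (h1 : -1 < x) (h2 : x < 1/7) :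
    HasDerivAt F15 (42/(1+x) - 42/(1-7*x)) x := by
  have ha : (0:ℝ) < 1 + x := by linarith
  have hb : (0:ℝ) < 1 - 7*x := by linarith
  have d1 : HasDerivAt (fun y : ℝ => Real.log (1 + y)) ((1+x)⁻¹) x := by
    have := (Real.hasDerivAt_log ha.ne').comp x ((hasDerivAt_id x).const_add 1)
    simpa [Function.comp_def] using this
  have d2 : HasDerivAt (fun y : ℝ => Real.log (1 - 7*y)) ((1-7*x)⁻¹ * (-7)) x := by
    have inner : HasDerivAt (fun y : ℝ => 1 - 7*y) (-7) x := by
      simpa using ((hasDerivAt_id x).const_mul 7).const_sub 1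
    exact (Real.hasDerivAt_log hb.ne').comp x inner
  have := (d1.const_mul 42).add (d2.const_mul 6)
  refine this.congr_deriv ?_
  simp only [div_eq_mul_inv]
  ring

lemma F15_mono : StrictMonoOn F15 (Set.Ioc (-1 : ℝ) 0) := by
  apply strictMonoOn_of_deriv_pos (convex_Ioc _ _)
  · intro x hx
    exact (F15_hasDeriv hx.1 (by have := hx.2; linarith)).differentiableAt.continuousAt.continuousWithinAt
  · intro x hx
    rw [interior_Ioc] at hx
    rw [(F15_hasDeriv hx.1 (by have := hx.2; linarith)).deriv]
    have ha : (0:ℝ) < 1 + x := by linarith [hx.1]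
    have hb : (0:ℝ) < 1 - 7*x := by linarith [hx.2]
    rw [sub_pos]
    apply div_lt_div_of_pos_left (by norm_num) ha
    linarith [hx.2]

lemma F15_anti : StrictAntiOn F15 (Set.Ico (0 : ℝ) (1/7)) := by
  apply strictAntiOn_of_deriv_neg (convex_Ico _ _)
  · intro x hx
    exact (F15_hasDeriv (by have := hx.1; linarith) hx.2).differentiableAt.continuousAt.continuousWithinAt
  · intro x hx
    rw [interior_Ico] at hx
    rw [(F15_hasDeriv (by have := hx.1; linarith) hx.2).deriv]
    have ha : (0:ℝ) < 1 + x := by linarith [hx.1]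
    have hb : (0:ℝ) < 1 - 7*x := by linarith [hx.2]
    rw [sub_neg]
    apply div_lt_div_of_pos_left (by norm_num) hb
    linarith [hx.1]

lemma F15_sym_mono : StrictMonoOn (fun u => F15 (-u) - F15 u) (Set.Icc (0 : ℝ) (1/49)) := by
  have hd : ∀ u ∈ Set.Icc (0:ℝ) (1/49),
      HasDerivAt (fun u => F15 (-u) - F15 u)
        (-(42/(1-u) - 42/(1+7*u)) - (42/(1+u) - 42/(1-7*u))) u := by
    intro u hu
    have h1 : HasDerivAt (fun u : ℝ => F15 (-u)) ((42/(1+(-u)) - 42/(1-7*(-u))) * (-1)) u := by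
      exact (F15_hasDeriv (by nlinarith [hu.1, hu.2]) (by nlinarith [hu.1, hu.2])).comp u
        (hasDerivAt_neg u)
    have h2 := F15_hasDeriv (show -1 < u by linarith [hu.1]) (show u < 1/7 by linarith [hu.2])
    have := h1.sub h2
    exact this.congr_deriv (by ring)
  apply strictMonoOn_of_deriv_pos (convex_Icc _ _)
  · intro u hu
    exact (hd u hu).differentiableAt.continuousAt.continuousWithinAt
  · intro u hu
    rw [interior_Icc] at hu
    rw [(hd u (Set.mem_Icc.2 ⟨hu.1.le, hu.2.le⟩)).deriv]
    have ha : (0:ℝ) < 1 - u := by linarith [hu.2]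
    have hb : (0:ℝ) < 1 + 7*u := by linarith [hu.1]
    have hc : (0:ℝ) < 1 + u := by linarith [hu.1]
    have he : (0:ℝ) < 1 - 7*u := by linarith [hu.2]
    have key : -(42/(1-u) - 42/(1+7*u)) - (42/(1+u) - 42/(1-7*u))
        = 4032 * u^2 / ((1-49*u^2) * (1-u^2)) := by
      have hq : (1:ℝ) - 49*u^2 ≠ 0 := by nlinarith
      have hp : (1:ℝ) - u^2 ≠ 0 := by nlinarith
      rw [div_sub_div _ _ ha.ne' hb.ne', div_sub_div _ _ hc.ne' he.ne', neg_div',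
        div_sub_div _ _ (mul_ne_zero ha.ne' hb.ne') (mul_ne_zero hc.ne' he.ne'),
        div_eq_div_iff (mul_ne_zero (mul_ne_zero ha.ne' hb.ne') (mul_ne_zero hc.ne' he.ne'))
          (mul_ne_zero hq hp)]
      ring
    rw [key]
    apply div_pos (by nlinarith [hu.1])
    apply mul_pos <;> nlinarith

lemma F15_exp {x : ℝ} (h1 : -1 < x) (h2 : x < 1/7) :
    Real.exp (F15 x) = (1+x)^42 * (1-7*x)^6 := by
  have ha : (0:ℝ) < 1 + x := by linarith
  have hb : (0:ℝ) < 1 - 7*x := by linarith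
  rw [F15, Real.exp_add,
    show (42:ℝ) = ((42:ℕ):ℝ) by norm_num, show (6:ℝ) = ((6:ℕ):ℝ) by norm_num,
    Real.exp_nat_mul, Real.exp_nat_mul, Real.exp_log ha, Real.exp_log hb]

theorem stmt15 (f : ℝ → ℝ)
    (hf : ∀ x, f x = 42 * Real.log (1 + x) + 6 * Real.log (1 - 7 * x)) :
    StrictMonoOn f (Set.Ioo (-1 : ℝ) 0) ∧
    StrictAntiOn f (Set.Ioo (0 : ℝ) (1 / 7)) ∧
    f 0 = 0 ∧
    (∀ t : ℝ, t ∈ Set.Ioc (0 : ℝ) (1 / 49) →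
      ∀ x : ℝ, x ∈ Set.Ioo (-1 : ℝ) (1 / 7) → 4 * t / 7 ≤ |x| →
        (1 + x) ^ 42 * (1 - 7 * x) ^ 6 ≤
          max ((1 + 4 * t / 7) ^ 42 * (1 - 4 * t) ^ 6)
              ((1 - 4 * t / 7) ^ 42 * (1 + 4 * t) ^ 6) ∧
        max ((1 + 4 * t / 7) ^ 42 * (1 - 4 * t) ^ 6)
            ((1 - 4 * t / 7) ^ 42 * (1 + 4 * t) ^ 6) =
          (1 - 4 * t / 7) ^ 42 * (1 + 4 * t) ^ 6 ∧
        (1 - 4 * t / 7) ^ 42 * (1 + 4 * t) ^ 6 < 1) := by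
  have hfe : f = F15 := funext fun x => by rw [hf x]; rfl
  subst hfe
  refine ⟨F15_mono.mono Set.Ioo_subset_Ioc_self, F15_anti.mono Set.Ioo_subset_Ico_self, ?_, ?_⟩
  · norm_num [F15]
  intro t ht x hx hxabs
  obtain ⟨ht0, ht1⟩ := ht
  obtain ⟨hx1, hx2⟩ := hx
  set u := 4 * t / 7 with hu
  have hu0 : 0 < u := by rw [hu]; linarith
  have hu49 : u ≤ 1/49 := by rw [hu]; linarith
  have hu7 : u < 1/7 := by linarith
  have hun : -1 < -u := by linarith
  -- rewrite the three products as exponentials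
  have hA : (1 + u) ^ 42 * (1 - 4*t) ^ 6 = Real.exp (F15 u) := by
    rw [F15_exp (by linarith) hu7, show (1:ℝ) - 7*u = 1 - 4*t by rw [hu]; ring]
  have hB : (1 - u) ^ 42 * (1 + 4*t) ^ 6 = Real.exp (F15 (-u)) := by
    rw [F15_exp hun (by linarith),
      show (1:ℝ) + -u = 1 - u by ring, show (1:ℝ) - 7*(-u) = 1 + 4*t by rw [hu]; ring]
  have hX : (1 + x) ^ 42 * (1 - 7*x) ^ 6 = Real.exp (F15 x) := (F15_exp hx1 hx2).symm
  -- F15 u < F15 (-u)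
  have hAB : F15 u < F15 (-u) := by
    have h0 : (0:ℝ) ∈ Set.Icc (0:ℝ) (1/49) := by norm_num
    have hum : u ∈ Set.Icc (0:ℝ) (1/49) := ⟨hu0.le, hu49⟩
    have := F15_sym_mono h0 hum hu0
    simp only [neg_zero] at this
    linarith
  -- F15 (-u) < 0
  have hB1 : F15 (-u) < 0 := by
    have h0 : (0:ℝ) ∈ Set.Ioc (-1:ℝ) 0 := by norm_num
    have hum : -u ∈ Set.Ioc (-1:ℝ) 0 := ⟨hun, by linarith⟩
    have := F15_mono hum h0 (by linarith)
    have hF0 : F15 0 = 0 := by norm_num [F15]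
    linarith
  have hmax : max ((1 + u) ^ 42 * (1 - 4*t) ^ 6) ((1 - u) ^ 42 * (1 + 4*t) ^ 6)
      = (1 - u) ^ 42 * (1 + 4*t) ^ 6 := by
    rw [hA, hB]
    exact max_eq_right (Real.exp_le_exp.2 hAB.le)
  refine ⟨?_, hmax, ?_⟩
  · rw [hX]
    rcases abs_cases x with ⟨habs, _⟩ | ⟨habs, _⟩
    · -- x ≥ u
      have hxu : u ≤ x := by rw [← habs]; exact hxabs
      have hFx : F15 x ≤ F15 u := by
        rcases eq_or_lt_of_le hxu with h | h
        · rw [h]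
        · exact (F15_anti ⟨hu0.le, hu7⟩ ⟨by linarith, hx2⟩ h).le
      calc Real.exp (F15 x) ≤ Real.exp (F15 u) := Real.exp_le_exp.2 hFx
        _ = (1 + u) ^ 42 * (1 - 4*t) ^ 6 := hA.symm
        _ ≤ _ := le_max_left _ _
    · -- x ≤ -u
      have hxu : x ≤ -u := by linarith [hxabs, habs]
      have hFx : F15 x ≤ F15 (-u) := by
        rcases eq_or_lt_of_le hxu with h | h
        · rw [h]
        · exact (F15_mono ⟨hx1, by linarith⟩ ⟨hun, by linarith⟩ h).le
      calc Real.exp (F15 x) ≤ Real.exp (F15 (-u)) := Real.exp_le_exp.2 hFx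
        _ = (1 - u) ^ 42 * (1 + 4*t) ^ 6 := hB.symm
        _ ≤ _ := le_max_right _ _
  · rw [hB]
    calc Real.exp (F15 (-u)) < Real.exp 0 := Real.exp_lt_exp.2 hB1
      _ = 1 := Real.exp_zero
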